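/- In M₂(ℂ), a nonzero rank-one matrix B satisfies: E₁₁ ⊥ B and every matrix X with E₁₁ ⊥ X and B ⊥ X has rank at most one, if and only if B is a nonzero scalar multiple of E₁₂ or of E₂₁. -/

import Mathlib

open Matrix

/-- The operator (spectral) norm of a complex matrix, induced by the Euclidean norm on `ℂⁿ`. -/
noncomputable def opNorm {n : ℕ} (A : Matrix (Fin n) (Fin n) ℂ) : ℝ :=
  ‖Matrix.toEuclideanCLM (𝕜 := ℂ) (n := Fin n) A‖

/-- Birkhoff–James orthogonality of matrices with respect to the operator norm. -/
def BJ {n : ℕ} (A B : Matrix (Fin n) (Fin n) ℂ) : Prop :=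
  ∀ c : ℂ, opNorm A ≤ opNorm (A + c • B)

lemma euc_norm (z : Fin 2 → ℂ) :
    ‖(WithLp.equiv 2 (Fin 2 → ℂ)).symm z‖ = Real.sqrt (‖z 0‖^2 + ‖z 1‖^2) := by
  rw [EuclideanSpace.norm_eq]
  simp [Fin.sum_univ_two]

lemma norm_dot_le (A : Matrix (Fin 2) (Fin 2) ℂ) (z w : Fin 2 → ℂ) :
    ‖star z ⬝ᵥ (A *ᵥ w)‖ ≤
      opNorm A * (Real.sqrt (‖z 0‖^2 + ‖z 1‖^2) * Real.sqrt (‖w 0‖^2 + ‖w 1‖^2)) := by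
  have h1 : star z ⬝ᵥ (A *ᵥ w) =
      inner ℂ ((WithLp.equiv 2 (Fin 2 → ℂ)).symm z)
        ((toEuclideanCLM (𝕜 := ℂ) A) ((WithLp.equiv 2 (Fin 2 → ℂ)).symm w)) := by
    rw [WithLp.equiv_symm_apply, Matrix.toEuclideanCLM_toLp, EuclideanSpace.inner_toLp_toLp]
    simp [Matrix.toLin'_apply, mul_comm]
  rw [h1, ← euc_norm z, ← euc_norm w]
  calc ‖(inner ℂ ((WithLp.equiv 2 (Fin 2 → ℂ)).symm z)
        ((toEuclideanCLM (𝕜 := ℂ) A) ((WithLp.equiv 2 (Fin 2 → ℂ)).symm w)) : ℂ)‖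
      ≤ ‖(WithLp.equiv 2 (Fin 2 → ℂ)).symm z‖ *
        ‖(toEuclideanCLM (𝕜 := ℂ) A) ((WithLp.equiv 2 (Fin 2 → ℂ)).symm w)‖ :=
        norm_inner_le_norm _ _
    _ ≤ ‖(WithLp.equiv 2 (Fin 2 → ℂ)).symm z‖ *
        (opNorm A * ‖(WithLp.equiv 2 (Fin 2 → ℂ)).symm w‖) := by
        gcongr
        exact ContinuousLinearMap.le_opNorm _ _
    _ = _ := by ring

lemma cs2 (a b c d : ℂ) : ‖a*c + b*d‖^2 ≤ (‖a‖^2 + ‖b‖^2) * (‖c‖^2 + ‖d‖^2) := by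
  have h1 : ‖a*c + b*d‖ ≤ ‖a‖*‖c‖ + ‖b‖*‖d‖ := by
    calc ‖a*c + b*d‖ ≤ ‖a*c‖ + ‖b*d‖ := norm_add_le _ _
      _ = ‖a‖*‖c‖ + ‖b‖*‖d‖ := by rw [norm_mul, norm_mul]
  nlinarith [norm_nonneg (a*c + b*d), norm_nonneg a, norm_nonneg b, norm_nonneg c,
    norm_nonneg d, sq_nonneg (‖a‖*‖d‖ - ‖b‖*‖c‖)]

lemma opNorm_le_frob (A : Matrix (Fin 2) (Fin 2) ℂ) :
    opNorm A ≤ Real.sqrt (‖A 0 0‖^2 + ‖A 0 1‖^2 + ‖A 1 0‖^2 + ‖A 1 1‖^2) := by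
  apply ContinuousLinearMap.opNorm_le_bound _ (Real.sqrt_nonneg _)
  intro x
  set y : Fin 2 → ℂ := WithLp.equiv 2 (Fin 2 → ℂ) x with hy
  have hx : x = (WithLp.equiv 2 (Fin 2 → ℂ)).symm y := rfl
  rw [hx, euc_norm, WithLp.equiv_symm_apply, Matrix.toEuclideanCLM_toLp, ← WithLp.equiv_symm_apply,
    euc_norm]
  have hmv0 : (A *ᵥ y) 0 = A 0 0 * y 0 + A 0 1 * y 1 := by
    simp [Matrix.mulVec, dotProduct, Fin.sum_univ_two]
  have hmv1 : (A *ᵥ y) 1 = A 1 0 * y 0 + A 1 1 * y 1 := by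
    simp [Matrix.mulVec, dotProduct, Fin.sum_univ_two]
  rw [hmv0, hmv1, ← Real.sqrt_mul (by positivity)]
  apply Real.sqrt_le_sqrt
  nlinarith [cs2 (A 0 0) (A 0 1) (y 0) (y 1), cs2 (A 1 0) (A 1 1) (y 0) (y 1),
    norm_nonneg (y 0), norm_nonneg (y 1), norm_nonneg (A 0 0), norm_nonneg (A 0 1),
    norm_nonneg (A 1 0), norm_nonneg (A 1 1)]

lemma opNorm_nonneg (A : Matrix (Fin 2) (Fin 2) ℂ) : 0 ≤ opNorm A := norm_nonneg _

lemma BJ_of (A X : Matrix (Fin 2) (Fin 2) ℂ) (u v : Fin 2 → ℂ)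
    (hA : opNorm A ≤ Real.sqrt ((‖u 0‖^2+‖u 1‖^2) * (‖v 0‖^2+‖v 1‖^2)))
    (huAv : star u ⬝ᵥ (A *ᵥ v) = (((‖u 0‖^2+‖u 1‖^2) * (‖v 0‖^2+‖v 1‖^2) : ℝ) : ℂ))
    (huXv : star u ⬝ᵥ (X *ᵥ v) = 0) : BJ A X := by
  intro c
  set P : ℝ := (‖u 0‖^2+‖u 1‖^2) * (‖v 0‖^2+‖v 1‖^2) with hP
  have hP0 : (0:ℝ) ≤ P := by positivity
  have key : star u ⬝ᵥ ((A + c • X) *ᵥ v) = (P : ℂ) := by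
    rw [Matrix.add_mulVec, dotProduct_add, huAv, Matrix.smul_mulVec,
      dotProduct_smul, huXv]
    simp
  have hge := norm_dot_le (A + c • X) u v
  rw [key] at hge
  rw [Complex.norm_real, Real.norm_of_nonneg hP0, ← Real.sqrt_mul (by positivity), ← hP] at hge
  rcases eq_or_lt_of_le (Real.sqrt_nonneg P) with h0 | h0
  · have : P = 0 := (Real.sqrt_eq_zero hP0).mp h0.symm
    rw [this] at hA
    simp at hA
    exact le_trans hA (opNorm_nonneg _)
  · have h2 : Real.sqrt P * Real.sqrt P ≤ opNorm (A + c • X) * Real.sqrt P := by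
      rw [Real.mul_self_sqrt hP0]; linarith
    have h3 : Real.sqrt P ≤ opNorm (A + c • X) :=
      le_of_mul_le_mul_right (by linarith) h0
    linarith

lemma core (t x y z : ℂ) (ht : t ≠ 0) :
    ∃ c : ℂ, ‖1 + c*t‖^2 + ‖c*x‖^2 + ‖c*y‖^2 + ‖c*z‖^2 < 1 := by
  set T : ℝ := ‖t‖^2 with hT
  set S : ℝ := ‖x‖^2 + ‖y‖^2 + ‖z‖^2 with hS
  have hT0 : 0 < T := by rw [hT]; exact pow_pos (norm_pos_iff.mpr ht) 2
  have hS0 : 0 ≤ S := by positivity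
  set ε : ℝ := T / (T + S) with hε
  have hε0 : 0 < ε := div_pos hT0 (by linarith)
  have hε1 : ε ≤ 1 := by
    rw [hε, div_le_one (by linarith)]; linarith
  refine ⟨-(ε : ℂ)/t, ?_⟩
  have hct : -(ε : ℂ)/t * t = -(ε : ℂ) := by field_simp
  have h1 : ‖1 + -(ε : ℂ)/t * t‖ = 1 - ε := by
    rw [hct]
    have : (1 : ℂ) + -(ε : ℂ) = ((1 - ε : ℝ) : ℂ) := by push_cast; ring
    rw [this, Complex.norm_real, Real.norm_of_nonneg (by linarith)]
  have hc : ‖-(ε : ℂ)/t‖ = ε / ‖t‖ := by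
    rw [norm_div, norm_neg, Complex.norm_real, Real.norm_of_nonneg hε0.le]
  have hmul : ∀ w : ℂ, ‖-(ε : ℂ)/t * w‖^2 = ε^2 / T * ‖w‖^2 := by
    intro w
    rw [norm_mul, hc, mul_pow, div_pow, hT]
  rw [h1, hmul, hmul, hmul]
  have hkey : ε * (T + S) = T := by
    rw [hε]; field_simp
  have : (1-ε)^2 + ε^2/T*‖x‖^2 + ε^2/T*‖y‖^2 + ε^2/T*‖z‖^2 = (1-ε)^2 + ε^2*S/T := by
    rw [hS]; ring
  rw [this]
  have h2 : ε^2 * S / T = ε - ε^2 := by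
    field_simp
    nlinarith [hkey]
  rw [h2]
  nlinarith

lemma one_le_opNorm_std (i j : Fin 2) : (1:ℝ) ≤ opNorm (Matrix.single i j (1:ℂ)) := by
  have h := norm_dot_le (Matrix.single i j 1) (Pi.single i 1) (Pi.single j 1)
  fin_cases i <;> fin_cases j <;>
    simpa [Matrix.mulVec, dotProduct, Fin.sum_univ_two, Matrix.single,
      Pi.single_apply] using h

lemma opNorm_lt_one (M : Matrix (Fin 2) (Fin 2) ℂ)
    (h : ‖M 0 0‖^2 + ‖M 0 1‖^2 + ‖M 1 0‖^2 + ‖M 1 1‖^2 < 1) : opNorm M < 1 :=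
  lt_of_le_of_lt (opNorm_le_frob M)
    (by rw [show (1:ℝ) = Real.sqrt 1 by simp]; exact Real.sqrt_lt_sqrt (by positivity) h)

lemma entry_zero {i j : Fin 2} {X : Matrix (Fin 2) (Fin 2) ℂ}
    (h : BJ (Matrix.single i j 1) X) : X i j = 0 := by
  by_contra ht
  have hE := one_le_opNorm_std i j
  fin_cases i <;> fin_cases j <;> simp only [Fin.zero_eta, Fin.mk_one, Fin.isValue] at h ht hE
  · obtain ⟨c, hc⟩ := core (X 0 0) (X 0 1) (X 1 0) (X 1 1) ht
    have hb := le_trans hE (h c)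
    have hlt : opNorm (Matrix.single (0:Fin 2) (0:Fin 2) (1:ℂ) + c • X) < 1 := by
      apply opNorm_lt_one
      simp only [Matrix.add_apply, Matrix.smul_apply, smul_eq_mul,
        Matrix.single_apply_same, Matrix.single, Matrix.of_apply]
      simp only [norm_mul] at hc
      norm_num
      linarith
    linarith
  · obtain ⟨c, hc⟩ := core (X 0 1) (X 0 0) (X 1 0) (X 1 1) ht
    have hb := le_trans hE (h c)
    have hlt : opNorm (Matrix.single (0:Fin 2) (1:Fin 2) (1:ℂ) + c • X) < 1 := by
      apply opNorm_lt_one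
      simp only [Matrix.add_apply, Matrix.smul_apply, smul_eq_mul,
        Matrix.single_apply_same, Matrix.single, Matrix.of_apply]
      simp only [norm_mul] at hc
      norm_num
      linarith
    linarith
  · obtain ⟨c, hc⟩ := core (X 1 0) (X 0 0) (X 0 1) (X 1 1) ht
    have hb := le_trans hE (h c)
    have hlt : opNorm (Matrix.single (1:Fin 2) (0:Fin 2) (1:ℂ) + c • X) < 1 := by
      apply opNorm_lt_one
      simp only [Matrix.add_apply, Matrix.smul_apply, smul_eq_mul,
        Matrix.single_apply_same, Matrix.single, Matrix.of_apply]
      simp only [norm_mul] at hc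
      norm_num
      linarith
    linarith
  · obtain ⟨c, hc⟩ := core (X 1 1) (X 0 0) (X 0 1) (X 1 0) ht
    have hb := le_trans hE (h c)
    have hlt : opNorm (Matrix.single (1:Fin 2) (1:Fin 2) (1:ℂ) + c • X) < 1 := by
      apply opNorm_lt_one
      simp only [Matrix.add_apply, Matrix.smul_apply, smul_eq_mul,
        Matrix.single_apply_same, Matrix.single, Matrix.of_apply]
      simp only [norm_mul] at hc
      norm_num
      linarith
    linarith

set_option synthInstance.maxHeartbeats 1000000 in
lemma opNorm_smul (c : ℂ) (A : Matrix (Fin 2) (Fin 2) ℂ) :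
    opNorm (c • A) = ‖c‖ * opNorm A := by
  unfold opNorm
  rw [_root_.map_smul]
  exact norm_smul c (toEuclideanCLM (𝕜 := ℂ) (n := Fin 2) A)

lemma rank_eq_two_of_det {A : Matrix (Fin 2) (Fin 2) ℂ} (h : A.det ≠ 0) : A.rank = 2 := by
  have hu : IsUnit A := (Matrix.isUnit_iff_isUnit_det A).mpr (isUnit_iff_ne_zero.mpr h)
  simpa using A.rank_of_isUnit hu

lemma rank_vecMulVec_le (w v : Fin 2 → ℂ) : (Matrix.vecMulVec w v).rank ≤ 1 := by
  rw [Matrix.vecMulVec_eq (Fin 1)]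
  refine le_trans (Matrix.rank_mul_le_left _ _) ?_
  exact (Matrix.rank_le_card_width (Matrix.replicateCol (Fin 1) w)).trans (by simp)

lemma conj_mul_self (z : ℂ) : (starRingEnd ℂ) z * z = ((‖z‖^2 : ℝ) : ℂ) := by
  rw [mul_comm, Complex.mul_conj, Complex.normSq_eq_norm_sq]

lemma mul_conj_self (z : ℂ) : z * (starRingEnd ℂ) z = ((‖z‖^2 : ℝ) : ℂ) := by
  rw [Complex.mul_conj, Complex.normSq_eq_norm_sq]

lemma BJ_smul_iff {c : ℂ} (hc : c ≠ 0) (A X : Matrix (Fin 2) (Fin 2) ℂ) :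
    BJ (c • A) X ↔ BJ A X := by
  constructor
  · intro h d
    have h2 := h (c * d)
    have e1 : c • A + (c*d) • X = c • (A + d • X) := by rw [smul_add, mul_smul]
    rw [e1, opNorm_smul, opNorm_smul] at h2
    exact le_of_mul_le_mul_left h2 (norm_pos_iff.mpr hc)
  · intro h d
    have e1 : c • A + d • X = c • (A + (d/c) • X) := by
      rw [smul_add, smul_smul]
      congr 2
      field_simp
    rw [e1, opNorm_smul, opNorm_smul]
    exact mul_le_mul_of_nonneg_left (h (d/c)) (norm_nonneg c)

lemma BJ_E00 {X : Matrix (Fin 2) (Fin 2) ℂ} (h : X 0 0 = 0) :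
    BJ (Matrix.single 0 0 (1 : ℂ)) X := by
  apply BJ_of _ _ ![1,0] ![1,0]
  · refine le_trans (opNorm_le_frob _) (le_of_eq ?_)
    congr 1
    simp [Matrix.single]
  · simp [dotProduct, Matrix.mulVec, Fin.sum_univ_two, Matrix.single]
  · simp [dotProduct, Matrix.mulVec, Fin.sum_univ_two, h]


/-- A nonzero rank-one `B ∈ M₂(ℂ)` satisfies `E₁₁ ⊥ B` together with: every common
outgoing BJ-neighbour of `E₁₁` and `B` has rank at most one, iff `B` is a nonzero
scalar multiple of `E₁₂` or of `E₂₁`. -/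
theorem stmt9 (B : Matrix (Fin 2) (Fin 2) ℂ) (hB : B.rank = 1) :
    (BJ (Matrix.single 0 0 (1 : ℂ)) B ∧
      ∀ X : Matrix (Fin 2) (Fin 2) ℂ,
        BJ (Matrix.single 0 0 (1 : ℂ)) X → BJ B X → X.rank ≤ 1) ↔
      ∃ c : ℂ, c ≠ 0 ∧
        (B = c • Matrix.single 0 1 (1 : ℂ) ∨
          B = c • Matrix.single 1 0 (1 : ℂ)) := by
  constructor
  · rintro ⟨h1, h2⟩
    have hB00 : B 0 0 = 0 := entry_zero h1
    have hdet : B.det = 0 := by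
      by_contra hd
      rw [rank_eq_two_of_det hd] at hB
      norm_num at hB
    rw [Matrix.det_fin_two, hB00] at hdet
    have hprod : B 0 1 * B 1 0 = 0 := by linear_combination -hdet
    have hBne : B ≠ 0 := by
      intro h0
      rw [h0, Matrix.rank_zero] at hB
      norm_num at hB
    have hB11 : B 1 1 = 0 := by
      by_contra hd
      rcases mul_eq_zero.mp hprod with h01 | h10
      · -- row 0 of B is zero
        set X : Matrix (Fin 2) (Fin 2) ℂ := !![0, 1; star (B 1 1), -star (B 1 0)] with hX
        have hbj1 : BJ (Matrix.single 0 0 (1 : ℂ)) X := by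
          apply BJ_E00; simp [hX]
        have hbj2 : BJ B X := by
          apply BJ_of _ _ ![0,1] ![star (B 1 0), star (B 1 1)]
          · refine le_trans (opNorm_le_frob _) (le_of_eq ?_)
            congr 1
            simp [hB00, h01, norm_star]
            try ring
          · simp [dotProduct, Matrix.mulVec, Fin.sum_univ_two, mul_conj_self]
            try push_cast
            try ring
          · simp [hX, dotProduct, Matrix.mulVec, Fin.sum_univ_two]
            ring
        have hr := h2 X hbj1 hbj2
        have hdX : X.det ≠ 0 := by
          simp [hX, Matrix.det_fin_two]
          exact hd
        rw [rank_eq_two_of_det hdX] at hr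
        norm_num at hr
      · -- column 0 of B is zero
        set X : Matrix (Fin 2) (Fin 2) ℂ := !![0, star (B 1 1); 1, -star (B 0 1)] with hX
        have hbj1 : BJ (Matrix.single 0 0 (1 : ℂ)) X := by
          apply BJ_E00; simp [hX]
        have hbj2 : BJ B X := by
          apply BJ_of _ _ ![B 0 1, B 1 1] ![0,1]
          · refine le_trans (opNorm_le_frob _) (le_of_eq ?_)
            congr 1
            simp [hB00, h10, norm_star]
            try ring
          · simp [dotProduct, Matrix.mulVec, Fin.sum_univ_two, conj_mul_self, hB00, h10]
            try push_cast
            try ring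
          · simp [hX, dotProduct, Matrix.mulVec, Fin.sum_univ_two]
            ring
        have hr := h2 X hbj1 hbj2
        have hdX : X.det ≠ 0 := by
          simp [hX, Matrix.det_fin_two]
          exact hd
        rw [rank_eq_two_of_det hdX] at hr
        norm_num at hr
    rcases mul_eq_zero.mp hprod with h01 | h10
    · refine ⟨B 1 0, fun h0 => hBne ?_, Or.inr ?_⟩
      · ext i j
        fin_cases i <;> fin_cases j <;> simp [hB00, h01, hB11, h0]
      · ext i j
        fin_cases i <;> fin_cases j <;> simp [Matrix.single, hB00, h01, hB11]
    · refine ⟨B 0 1, fun h0 => hBne ?_, Or.inl ?_⟩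
      · ext i j
        fin_cases i <;> fin_cases j <;> simp [hB00, h10, hB11, h0]
      · ext i j
        fin_cases i <;> fin_cases j <;> simp [Matrix.single, hB00, h10, hB11]
  · rintro ⟨c, hc, rfl | rfl⟩
    · constructor
      · apply BJ_E00
        simp [Matrix.single]
      · intro X hX1 hX2
        have hX00 : X 0 0 = 0 := entry_zero hX1
        have hX01 : X 0 1 = 0 := entry_zero ((BJ_smul_iff hc _ _).mp hX2)
        have : X = Matrix.vecMulVec ![0,1] ![X 1 0, X 1 1] := by
          ext i j
          fin_cases i <;> fin_cases j <;> simp [Matrix.vecMulVec, hX00, hX01]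
        rw [this]
        exact _root_.rank_vecMulVec_le _ _
    · constructor
      · apply BJ_E00
        simp [Matrix.single]
      · intro X hX1 hX2
        have hX00 : X 0 0 = 0 := entry_zero hX1
        have hX10 : X 1 0 = 0 := entry_zero ((BJ_smul_iff hc _ _).mp hX2)
        have : X = Matrix.vecMulVec ![X 0 1, X 1 1] ![0,1] := by
          ext i j
          fin_cases i <;> fin_cases j <;> simp [Matrix.vecMulVec, hX00, hX10]
        rw [this]
        exact _root_.rank_vecMulVec_le _ _
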